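/- For every integer r ≥ 2, one has f(r−1, 1, 1) ≤ f(r−1, 1), where the left-hand side is the three-bin value and the right-hand side is the two-bin value. -/

import Mathlib

namespace BallsBins

/-- The set of non-empty bins of an assignment. -/
def posBins {k : ℕ} (n : Fin k → ℕ) : Finset (Fin k) :=
  Finset.univ.filter (fun i => 0 < n i)

/-- Expected number of balls in the last non-empty bin of the uniform removal process. -/
noncomputable def f {k : ℕ} (n : Fin k → ℕ) : ℝ :=
  if (posBins n).card ≤ 1 then ((∑ i, n i : ℕ) : ℝ)
  else ((posBins n).card : ℝ)⁻¹ *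
    ∑ i ∈ (posBins n).attach, f (Function.update n i.1 (n i.1 - 1))
termination_by ∑ i, n i
decreasing_by
  have hi : 0 < n i.1 := by
    have h := i.2
    simp only [posBins, Finset.mem_filter] at h
    exact h.2
  have h1 : ∑ j, Function.update n i.1 (n i.1 - 1) j
      = (n i.1 - 1) + ∑ j ∈ Finset.univ \ {i.1}, n j :=
    Finset.sum_update_of_mem (Finset.mem_univ i.1) n (n i.1 - 1)
  have h2 : ∑ j, n j = n i.1 + ∑ j ∈ Finset.univ \ {i.1}, n j := by
    rw [Finset.sum_eq_sum_sdiff_singleton_add (Finset.mem_univ i.1)]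
    ring
  omega


lemma f_rec {k : ℕ} (n : Fin k → ℕ) (h : ¬ (posBins n).card ≤ 1) :
    f n = ((posBins n).card : ℝ)⁻¹ * ∑ i ∈ posBins n, f (Function.update n i (n i - 1)) := by
  rw [f, if_neg h, ← Finset.sum_attach (posBins n) (fun i => f (Function.update n i (n i - 1)))]

lemma f_base {k : ℕ} (n : Fin k → ℕ) (h : (posBins n).card ≤ 1) :
    f n = ((∑ i, n i : ℕ) : ℝ) := by rw [f, if_pos h]

lemma pb2 (a : ℕ) (ha : 0 < a) : posBins ![a,1] = Finset.univ := by
  ext i; fin_cases i <;> simp [posBins, ha]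

lemma f_two_base : f ![0,1] = 1 := by
  rw [f_base]
  · simp [Fin.sum_univ_two]
  · have : posBins ![0,(1:ℕ)] ⊆ {1} := by
      intro i hi; fin_cases i <;> simp_all [posBins]
    exact (Finset.card_le_card this).trans (by simp)

lemma fa0 (a : ℕ) : f ![a,0] = a := by
  rw [f_base]
  · simp [Fin.sum_univ_two]
  · have : posBins ![a,0] ⊆ {0} := by
      intro i hi; fin_cases i <;> simp_all [posBins]
    exact (Finset.card_le_card this).trans (by simp)

lemma f_two_rec (a : ℕ) : f ![a+1,1] = (f ![a,1] + (a+1))/2 := by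
  rw [f_rec]
  · rw [pb2 _ (Nat.succ_pos a)]
    rw [Fin.sum_univ_two]
    have h0 : Function.update ![a+1,1] 0 (![a+1,(1:ℕ)] 0 - 1) = ![a,1] := by
      funext i; fin_cases i <;> simp [Function.update]
    have h1 : Function.update ![a+1,1] 1 (![a+1,(1:ℕ)] 1 - 1) = ![a+1,0] := by
      funext i; fin_cases i <;> simp [Function.update]
    rw [h0, h1, fa0]
    simp [Finset.card_univ]
    ring
  · rw [pb2 _ (Nat.succ_pos a)]; simp

lemma f001 : f ![0,0,1] = 1 := by
  rw [f_base]
  · simp [Fin.sum_univ_three]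
  · have : posBins ![0,0,(1:ℕ)] ⊆ {2} := by
      intro i hi; fin_cases i <;> simp_all [posBins]
    exact (Finset.card_le_card this).trans (by simp)

lemma f010 : f ![0,1,0] = 1 := by
  rw [f_base]
  · simp [Fin.sum_univ_three]
  · have : posBins ![0,1,(0:ℕ)] ⊆ {1} := by
      intro i hi; fin_cases i <;> simp_all [posBins]
    exact (Finset.card_le_card this).trans (by simp)

lemma fa00 (a : ℕ) : f ![a,0,0] = a := by
  rw [f_base]
  · simp [Fin.sum_univ_three]
  · have : posBins ![a,0,0] ⊆ {0} := by
      intro i hi; fin_cases i <;> simp_all [posBins]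
    exact (Finset.card_le_card this).trans (by simp)

lemma pb201 (a : ℕ) : posBins ![a+1,0,1] = {0,2} := by
  ext i; fin_cases i <;> simp [posBins]

lemma pb210 (a : ℕ) : posBins ![a+1,1,0] = {0,1} := by
  ext i; fin_cases i <;> simp [posBins]

lemma f201_rec (a : ℕ) : f ![a+1,0,1] = (f ![a,0,1] + (a+1))/2 := by
  rw [f_rec]
  · rw [pb201]
    rw [Finset.sum_pair (by decide : (0 : Fin 3) ≠ 2)]
    have h0 : Function.update ![a+1,0,1] 0 (![a+1,0,(1:ℕ)] 0 - 1) = ![a,0,1] := by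
      funext i; fin_cases i <;> simp [Function.update]
    have h2 : Function.update ![a+1,0,1] 2 (![a+1,0,(1:ℕ)] 2 - 1) = ![a+1,0,0] := by
      funext i; fin_cases i <;> simp [Function.update]
    rw [h0, h2, fa00, (by decide : ({0,2} : Finset (Fin 3)).card = 2)]
    push_cast
    ring
  · rw [pb201]; decide

lemma f210_rec (a : ℕ) : f ![a+1,1,0] = (f ![a,1,0] + (a+1))/2 := by
  rw [f_rec]
  · rw [pb210]
    rw [Finset.sum_pair (by decide : (0 : Fin 3) ≠ 1)]
    have h0 : Function.update ![a+1,1,0] 0 (![a+1,1,(0:ℕ)] 0 - 1) = ![a,1,0] := by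
      funext i; fin_cases i <;> simp [Function.update]
    have h1 : Function.update ![a+1,1,0] 1 (![a+1,1,(0:ℕ)] 1 - 1) = ![a+1,0,0] := by
      funext i; fin_cases i <;> simp [Function.update]
    rw [h0, h1, fa00, (by decide : ({0,1} : Finset (Fin 3)).card = 2)]
    push_cast
    ring
  · rw [pb210]; decide

lemma f201 (a : ℕ) : f ![a,0,1] = f ![a,1] := by
  induction a with
  | zero => rw [f001, f_two_base]
  | succ n ih => rw [f201_rec, f_two_rec, ih]

lemma f210 (a : ℕ) : f ![a,1,0] = f ![a,1] := by
  induction a with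
  | zero => rw [f010, f_two_base]
  | succ n ih => rw [f210_rec, f_two_rec, ih]

lemma f011 : f ![0,1,1] = 1 := by
  rw [f_rec]
  · have hpb : posBins ![(0:ℕ),1,1] = {1,2} := by
      ext i; fin_cases i <;> simp [posBins]
    rw [hpb, Finset.sum_pair (by decide : (1 : Fin 3) ≠ 2)]
    have h1 : Function.update ![0,1,1] 1 (![(0:ℕ),1,1] 1 - 1) = ![0,0,1] := by
      funext i; fin_cases i <;> simp [Function.update]
    have h2 : Function.update ![0,1,1] 2 (![(0:ℕ),1,1] 2 - 1) = ![0,1,0] := by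
      funext i; fin_cases i <;> simp [Function.update]
    rw [h1, h2, f001, f010, (by decide : ({1,2} : Finset (Fin 3)).card = 2)]
    norm_num
  · have hpb : posBins ![(0:ℕ),1,1] = {1,2} := by
      ext i; fin_cases i <;> simp [posBins]
    rw [hpb]; decide

lemma pb3 (a : ℕ) : posBins ![a+1,1,1] = Finset.univ := by
  ext i; fin_cases i <;> simp [posBins]

lemma f_three_rec (a : ℕ) :
    f ![a+1,1,1] = (f ![a,1,1] + f ![a+1,0,1] + f ![a+1,1,0])/3 := by
  rw [f_rec]
  · rw [pb3, Fin.sum_univ_three]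
    have h0 : Function.update ![a+1,1,1] 0 (![a+1,1,(1:ℕ)] 0 - 1) = ![a,1,1] := by
      funext i; fin_cases i <;> simp [Function.update]
    have h1 : Function.update ![a+1,1,1] 1 (![a+1,1,(1:ℕ)] 1 - 1) = ![a+1,0,1] := by
      funext i; fin_cases i <;> simp [Function.update]
    have h2 : Function.update ![a+1,1,1] 2 (![a+1,1,(1:ℕ)] 2 - 1) = ![a+1,1,0] := by
      funext i; fin_cases i <;> simp [Function.update]
    rw [h0, h1, h2]
    simp [Finset.card_univ]
    ring
  · rw [pb3]; simp

lemma g_le (a : ℕ) : f ![a,1] ≤ a + 1 := by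
  induction a with
  | zero => rw [f_two_base]; norm_num
  | succ n ih => rw [f_two_rec]; push_cast; push_cast at ih; linarith

lemma g_mono (a : ℕ) : f ![a,1] ≤ f ![a+1,1] := by
  have := g_le a
  rw [f_two_rec]; push_cast; push_cast at this; linarith

lemma main (a : ℕ) : f ![a,1,1] ≤ f ![a,1] := by
  induction a with
  | zero => rw [f011, f_two_base]
  | succ n ih =>
    rw [f_three_rec, f201, f210]
    have h1 := g_mono n
    linarith


/-- For every integer `r ≥ 2`, the three-bin value `f (r-1, 1, 1)` is at most
the two-bin value `f (r-1, 1)`. -/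
theorem three_bin_le_two_bin (r : ℕ) (hr : 2 ≤ r) :
    f ![r - 1, 1, 1] ≤ f ![r - 1, 1] := by
  exact main (r - 1)

end BallsBins
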